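/- Let X₁ and X₂ be standard Borel spaces. The cross-product map (D₁, D₂) ↦ D₁ ×ˢ D₂ (the multiset of all pairs (x₁, x₂) with x₁ ∈ D₁ and x₂ ∈ D₂, so that the multiplicity of (x₁, x₂) is the product of the multiplicity of x₁ in D₁ and the multiplicity of x₂ in D₂) from Multiset X₁ × Multiset X₂ to Multiset (X₁ × X₂) is measurable, where each Multiset space carries its counting σ-algebra, Multiset X₁ × Multiset X₂ the product σ-algebra, and X₁ × X₂ the product measurable structure. -/

import Mathlib

/- `countIn D E` is the number of elements of the finite multiset `D` lying in the set `E`,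
counted with multiplicity. -/
open Classical in
noncomputable def countIn {X : Type*} (D : Multiset X) (E : Set X) : ℕ :=
  (D.filter (· ∈ E)).card

/-- The counting σ-algebra on the space of finite multisets over a measurable space `X`:
generated by the counting events `C(E,n) = {D | countIn D E = n}` for `E` measurable, `n : ℕ`. -/
def countingMS (X : Type*) [MeasurableSpace X] : MeasurableSpace (Multiset X) :=
  MeasurableSpace.generateFrom
    {C : Set (Multiset X) |
      ∃ (E : Set X) (n : ℕ), MeasurableSet E ∧ C = {D : Multiset X | countIn D E = n}}

open MeasureTheory MeasurableSpace ENNReal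

section aux

variable {X Y : Type*}

lemma countIn_zero (E : Set X) : countIn (0 : Multiset X) E = 0 := rfl

open Classical in
lemma countIn_cons (a : X) (D : Multiset X) (E : Set X) :
    countIn (a ::ₘ D) E = (if a ∈ E then 1 else 0) + countIn D E := by
  classical
  simp only [countIn, Multiset.filter_cons, Multiset.card_add]
  by_cases h : a ∈ E <;> simp [h]

lemma countIn_empty (D : Multiset X) : countIn D (∅ : Set X) = 0 := by
  classical
  simp only [countIn, Multiset.card_eq_zero, Multiset.filter_eq_nil]
  simp

lemma countIn_univ (D : Multiset X) : countIn D (Set.univ : Set X) = Multiset.card D := by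
  classical
  induction D using Multiset.induction with
  | empty => simp [countIn_zero]
  | cons a D ih => simp [countIn_cons, ih, add_comm]

lemma countIn_map {f : Y → X} (D : Multiset Y) (E : Set X) :
    countIn (D.map f) E = countIn D (f ⁻¹' E) := by
  classical
  induction D using Multiset.induction with
  | empty => simp [countIn_zero]
  | cons a D ih => simp [countIn_cons, ih, Set.mem_preimage]

lemma countIn_add (D₁ D₂ : Multiset X) (E : Set X) :
    countIn (D₁ + D₂) E = countIn D₁ E + countIn D₂ E := by
  classical
  simp [countIn, Multiset.filter_add]

lemma countIn_congr (D : Multiset X) {E F : Set X} (h : ∀ x ∈ D, x ∈ E ↔ x ∈ F) :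
    countIn D E = countIn D F := by
  classical
  simp only [countIn]
  rw [Multiset.filter_congr h]

lemma countIn_product (D₁ : Multiset X) (D₂ : Multiset Y) (E₁ : Set X) (E₂ : Set Y) :
    countIn (D₁ ×ˢ D₂) (E₁ ×ˢ E₂) = countIn D₁ E₁ * countIn D₂ E₂ := by
  classical
  induction D₁ using Multiset.induction with
  | empty => simp [countIn_zero, countIn]
  | cons a D ih =>
    rw [Multiset.cons_product, countIn_add, ih, countIn_cons]
    have : countIn (Multiset.map (Prod.mk a) D₂) (E₁ ×ˢ E₂)
        = (if a ∈ E₁ then 1 else 0) * countIn D₂ E₂ := by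
      rw [countIn_map]
      by_cases h : a ∈ E₁
      · rw [if_pos h, one_mul]
        apply countIn_congr
        intro x _
        simp [Set.mem_preimage, Set.mem_prod, h]
      · rw [if_neg h, zero_mul]
        rw [countIn_congr (D₂) (F := (∅ : Set Y)) (by intro x _; simp [h]), countIn_empty]
    rw [this, add_mul]

lemma countIn_compl_add (D : Multiset X) (E : Set X) :
    countIn D Eᶜ + countIn D E = Multiset.card D := by
  classical
  induction D using Multiset.induction with
  | empty => simp [countIn_zero]
  | cons a D ih =>
    simp only [countIn_cons, Multiset.card_cons]
    by_cases h : a ∈ E <;> simp [h, Set.mem_compl_iff] <;> omega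

lemma countIn_iUnion (D : Multiset X) (E : ℕ → Set X) (hd : Pairwise (Function.onFun Disjoint E)) :
    (countIn D (⋃ i, E i) : ℝ≥0∞) = ∑' i, (countIn D (E i) : ℝ≥0∞) := by
  classical
  induction D using Multiset.induction with
  | empty => simp [countIn_zero]
  | cons a D ih =>
    simp only [countIn_cons, Nat.cast_add]
    rw [ih, ENNReal.tsum_add]
    congr 1
    -- indicator of union = tsum of indicators
    by_cases h : a ∈ ⋃ i, E i
    · obtain ⟨j, hj⟩ := Set.mem_iUnion.1 h
      rw [if_pos h]
      rw [tsum_eq_single j]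
      · simp [hj]
      · intro k hk
        have : a ∉ E k := fun ha =>
          (hd hk).le_bot (⟨ha, hj⟩ : a ∈ E k ∩ E j)
        simp [this]
    · rw [if_neg h]
      have : ∀ i, a ∉ E i := fun i hi => h (Set.mem_iUnion.2 ⟨i, hi⟩)
      simp [this]

variable [MeasurableSpace X]

lemma measurable_countIn {E : Set X} (hE : MeasurableSet E) :
    @Measurable _ _ (countingMS X) _ (fun D => countIn D E) := by
  letI := countingMS X
  apply measurable_to_countable'
  intro n
  have : (fun D => countIn D E) ⁻¹' {n} = {D : Multiset X | countIn D E = n} := by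
    ext D; simp
  rw [this]
  exact measurableSet_generateFrom ⟨E, n, hE, rfl⟩

end aux

theorem crossProduct_measurable {X₁ X₂ : Type*} [MeasurableSpace X₁] [StandardBorelSpace X₁]
    [MeasurableSpace X₂] [StandardBorelSpace X₂] :
    @Measurable _ _ ((countingMS X₁).prod (countingMS X₂)) (countingMS (X₁ × X₂))
      (fun p : Multiset X₁ × Multiset X₂ => p.1 ×ˢ p.2) := by
  letI m : MeasurableSpace (Multiset X₁ × Multiset X₂) := (countingMS X₁).prod (countingMS X₂)
  have mfst : @Measurable _ _ m (countingMS X₁) Prod.fst := @measurable_fst _ _ _ _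
  have msnd : @Measurable _ _ m (countingMS X₂) Prod.snd := @measurable_snd _ _ _ _
  have key : ∀ E : Set (X₁ × X₂), MeasurableSet E →
      Measurable (fun p : Multiset X₁ × Multiset X₂ => (countIn (p.1 ×ˢ p.2) E : ℝ≥0∞)) := by
    have card_meas : Measurable
        (fun p : Multiset X₁ × Multiset X₂ =>
          (countIn (p.1 ×ˢ p.2) (Set.univ : Set (X₁ × X₂)) : ℝ≥0∞)) := by
      have : ∀ p : Multiset X₁ × Multiset X₂,
          countIn (p.1 ×ˢ p.2) (Set.univ : Set (X₁ × X₂))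
            = countIn p.1 Set.univ * countIn p.2 Set.univ := by
        intro p
        rw [← Set.univ_prod_univ, countIn_product]
      simp only [this, Nat.cast_mul]
      exact (((measurable_from_top (f := (Nat.cast : ℕ → ℝ≥0∞))).comp ((measurable_countIn MeasurableSet.univ).comp mfst)).mul
        ((measurable_from_top (f := (Nat.cast : ℕ → ℝ≥0∞))).comp ((measurable_countIn MeasurableSet.univ).comp msnd)))
    refine MeasurableSpace.induction_on_inter generateFrom_prod.symm isPiSystem_prod ?_ ?_ ?_ ?_
    · simp only [countIn_empty, Nat.cast_zero]
      exact measurable_const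
    · rintro t ⟨E₁, h₁, E₂, h₂, rfl⟩
      simp only [countIn_product, Nat.cast_mul]
      exact (((measurable_from_top (f := (Nat.cast : ℕ → ℝ≥0∞))).comp ((measurable_countIn h₁).comp mfst)).mul
        ((measurable_from_top (f := (Nat.cast : ℕ → ℝ≥0∞))).comp ((measurable_countIn h₂).comp msnd)))
    · intro t ht hC
      have : ∀ p : Multiset X₁ × Multiset X₂,
          (countIn (p.1 ×ˢ p.2) tᶜ : ℝ≥0∞)
            = (countIn (p.1 ×ˢ p.2) (Set.univ : Set (X₁ × X₂)) : ℝ≥0∞)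
              - (countIn (p.1 ×ˢ p.2) t : ℝ≥0∞) := by
        intro p
        have h := countIn_compl_add (p.1 ×ˢ p.2) t
        rw [countIn_univ, ← h, Nat.cast_add,
          ENNReal.add_sub_cancel_right (by simp : (countIn (p.1 ×ˢ p.2) t : ℝ≥0∞) ≠ ⊤)]
      simp only [this]
      exact card_meas.sub hC
    · intro f hdisj hmeas hC
      have : ∀ p : Multiset X₁ × Multiset X₂,
          (countIn (p.1 ×ˢ p.2) (⋃ i, f i) : ℝ≥0∞)
            = ∑' i, (countIn (p.1 ×ˢ p.2) (f i) : ℝ≥0∞) :=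
        fun p => countIn_iUnion _ f hdisj
      simp only [this]
      exact Measurable.ennreal_tsum hC
  apply measurable_generateFrom
  rintro t ⟨E, n, hE, rfl⟩
  have : (fun p : Multiset X₁ × Multiset X₂ => p.1 ×ˢ p.2) ⁻¹'
      {D : Multiset (X₁ × X₂) | countIn D E = n}
      = (fun p : Multiset X₁ × Multiset X₂ => (countIn (p.1 ×ˢ p.2) E : ℝ≥0∞)) ⁻¹'
        {(n : ℝ≥0∞)} := by
    ext p
    simp [Nat.cast_inj]
  rw [this]
  exact key E hE (measurableSet_singleton _)
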